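/- Let n ≥ 0 and set m = n − τ_0∘ϑ^n and i = ζ_0∘ϑ^n, where τ_0 = inf{k > 0 : S(k) ≥ 0} and ζ_0 = −S(τ_0 − 1). If m ≥ 0 (and τ_0∘ϑ^n < ∞), then i ∈ {0,…,|𝒫_m|−1} and χ(m,i) = n, where χ(m,k) = inf{j ≥ m+1 : S(j) = S(m+1) − k}. -/

import Mathlib

open scoped Classical NNReal
noncomputable section

/-- Finite point measures on `(0,∞)`, modeled as multisets of atoms in `ℝ≥0`. -/
abbrev PtM := Multiset ℝ≥0

/-- A stick: a life-length together with a finite point measure of birth times. -/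
abbrev Stick := ℝ≥0 × PtM

/-- The space of doubly infinite sequences of sticks. -/
abbrev Om := ℤ → Stick

/-- The shift operator `θ_n`. -/
def theta (n : ℤ) (ω : Om) : Om := fun k => ω (n + k)

/-- The dual (time-reversal) operator `ϑ^n`. -/
def dual (n : ℤ) (ω : Om) : Om := fun k => ω (n - k - 1)

/-- Life length of the `k`-th individual. -/
def Vc (ω : Om) (k : ℤ) : ℝ≥0 := (ω k).1

/-- Point measure (ages at childbearing) of the `k`-th individual. -/
def Pc (ω : Om) (k : ℤ) : PtM := (ω k).2

/-- The Lukasiewicz path `S`. -/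
def Sw (ω : Om) (n : ℤ) : ℤ :=
  if 0 ≤ n then ∑ k ∈ Finset.range n.toNat, ((Multiset.card (Pc ω (k : ℤ)) : ℤ) - 1)
  else - ∑ k ∈ Finset.range (-n).toNat, ((Multiset.card (Pc ω (-(k : ℤ) - 1)) : ℤ) - 1)

/-- `π(ν)`: the supremum of the support (largest atom) of a finite point measure. -/
def piM (ν : PtM) : ℝ≥0 := ν.sup

/-- `Υ_j(ν)`: removes the `j` largest atoms of `ν`. -/
def upsilon (j : ℕ) (ν : PtM) : PtM :=
  ((ν.sort (· ≤ ·)).take (Multiset.card ν - j) : List ℝ≥0)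

/-- The map `Φ` driving the spine process dynamics. -/
def phiSp (Y : List PtM) (ν : PtM) : List PtM :=
  if ν = 0 then
    match Y.reverse.dropWhile (fun m => decide (Multiset.card m < 2)) with
    | [] => []
    | h :: t => (upsilon 1 h :: t).reverse
  else Y ++ [ν]

/-- The spine process `𝕊₀ⁿ`. -/
def spine (ω : Om) : ℕ → List PtM
  | 0 => []
  | n + 1 => phiSp (spine ω n) (Pc ω (n : ℤ))

/-- `π` extended to finite sequences of point measures. -/
def piL (Y : List PtM) : ℝ≥0 := (Y.map piM).sum

/-- The chronological height process `ℍ(n) = π(𝕊₀ⁿ)`. -/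
def Hchr (ω : Om) (n : ℕ) : ℝ≥0 := piL (spine ω n)

/-- The genealogical height process
`𝓗(n) = #{k ∈ {0,…,n−1} : S(k+1) ≤ min_{k+1 ≤ j ≤ n} S(j)}`. -/
def genH (ω : Om) (n : ℕ) : ℕ :=
  ((Finset.range n).filter
    (fun k : ℕ => ∀ j : ℕ, j ∈ Finset.Icc (k + 1) n → Sw ω ((k : ℤ) + 1) ≤ Sw ω (j : ℤ))).card

/-- Weak ascending ladder height times `T(k)` (valued `⊤` if nonexistent). -/
def ladderT (ω : Om) : ℕ → ℕ∞
  | 0 => 0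
  | k + 1 => sInf {x : ℕ∞ | ∃ m j : ℕ, x = (m : ℕ∞) ∧ ladderT ω k = (j : ℕ∞) ∧
      j < m ∧ Sw ω (j : ℤ) ≤ Sw ω (m : ℤ)}

/-- `T^{-1}(n) = min{k ≥ 0 : T(k) ≥ n}`. -/
def Tinv (ω : Om) (n : ℕ) : ℕ := sInf {k : ℕ | (n : ℕ∞) ≤ ladderT ω k}

/-- `T̃^{-1}(n) = max{k ≥ 0 : T(k) ≤ n}`. -/
def tildeTinv (ω : Om) (n : ℕ) : ℕ := sSup {k : ℕ | ladderT ω k ≤ (n : ℕ∞)}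

/-- First passage time upward `τ_ℓ = inf{k > 0 : S(k) ≥ ℓ}`. -/
def tauUp (ω : Om) (ℓ : ℤ) : ℕ∞ :=
  sInf {x : ℕ∞ | ∃ k : ℕ, x = (k : ℕ∞) ∧ 0 < k ∧ ℓ ≤ Sw ω (k : ℤ)}

/-- First hitting time downward `τ⁻_ℓ = inf{k ≥ 0 : S(k) = −ℓ}`. -/
def tauDown (ω : Om) (ℓ : ℤ) : ℕ∞ :=
  sInf {x : ℕ∞ | ∃ k : ℕ, x = (k : ℕ∞) ∧ Sw ω (k : ℤ) = -ℓ}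

/-- `τ_ℓ` as a natural number (junk value `0` when infinite). -/
def tauUpN (ω : Om) (ℓ : ℤ) : ℕ := (tauUp ω ℓ).toNat

/-- The undershoot `ζ_ℓ = ℓ − S(τ_ℓ − 1)`. -/
def zetaU (ω : Om) (ℓ : ℤ) : ℤ := ℓ - Sw ω ((tauUpN ω ℓ : ℤ) - 1)

/-- `μ_ℓ = Υ_{ζ_ℓ}(𝒫_{τ_ℓ − 1})`. -/
def muU (ω : Om) (ℓ : ℤ) : PtM := upsilon (zetaU ω ℓ).toNat (Pc ω ((tauUpN ω ℓ : ℤ) - 1))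

/-- `𝒬(k) = μ₀ ∘ θ_{T(k−1)}`. -/
def Qcal (ω : Om) (k : ℕ) : PtM := muU (theta ((ladderT ω (k - 1)).toNat : ℤ) ω) 0

/-- `𝕐(k) = π(𝒬(k))`. -/
def Ybb (ω : Om) (k : ℕ) : ℝ≥0 := piM (Qcal ω k)

/-- The backward maximum `L(m) = max_{0 ≤ k ≤ m} S(−k)`. -/
def Lmax (ω : Om) (m : ℕ) : ℤ :=
  Finset.sup' (Finset.range (m + 1)) Finset.nonempty_range_add_one (fun k => Sw ω (-(k : ℤ)))

/-- The ancestor set `𝒜(n) = {n − T(k)∘ϑ^n : k ≥ 0}` (only finite ladder times). -/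
def Aset (ω : Om) (n : ℕ) : Set ℤ :=
  {a | ∃ k j : ℕ, ladderT (dual (n : ℤ) ω) k = (j : ℕ∞) ∧ a = (n : ℤ) - (j : ℤ)}

/-- `mrca(m,n) = max(𝒜(m) ∩ 𝒜(n))`. -/
def mrcaZ (ω : Om) (m n : ℕ) : ℤ := sSup (Aset ω m ∩ Aset ω n)

/-- `χ(m,k) = inf{j ≥ m+1 : S(j) = S(m+1) − k}`. -/
def chiT (ω : Om) (m k : ℕ) : ℕ∞ :=
  sInf {x : ℕ∞ | ∃ j : ℕ, x = (j : ℕ∞) ∧ m + 1 ≤ j ∧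
    Sw ω (j : ℤ) = Sw ω ((m : ℤ) + 1) - (k : ℤ)}

/-- `χ(m) = inf{j ≥ m+1 : S(j) = S(m) − 1}`. -/
def chiF (ω : Om) (m : ℕ) : ℕ∞ :=
  sInf {x : ℕ∞ | ∃ j : ℕ, x = (j : ℕ∞) ∧ m + 1 ≤ j ∧ Sw ω (j : ℤ) = Sw ω (m : ℤ) - 1}

/-- The functional `D_ℓ(𝕊₀^m)` of the spine, expressed through the dual walk:
`D_ℓ = (Σ_{i : 0 < T(i) ≤ min(τ_ℓ, m)} 𝕐(i) − 1_{τ_ℓ ≤ m} π(μ_ℓ)) ∘ ϑ^m`, with `D_0 ≡ 0`. -/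
def Dfun (ω : Om) (m : ℕ) (ℓ : ℤ) : ℝ :=
  if ℓ < 1 then 0 else
    (∑ i ∈ (Finset.Icc 1 m).filter
        (fun i => 0 < ladderT (dual (m : ℤ) ω) i ∧
          ladderT (dual (m : ℤ) ω) i ≤ min (tauUp (dual (m : ℤ) ω) ℓ) (m : ℕ∞)),
      (Ybb (dual (m : ℤ) ω) i : ℝ))
    - (if tauUp (dual (m : ℤ) ω) ℓ ≤ (m : ℕ∞) then (piM (muU (dual (m : ℤ) ω) ℓ) : ℝ) else 0)

/-- `K_j = 2𝒱(j−1) − ℍ(j)`. -/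
def Kt (ω : Om) (j : ℕ) : ℝ := 2 * ∑ k ∈ Finset.range j, (Vc ω (k : ℤ) : ℝ) - (Hchr ω j : ℝ)

/-- The chronological contour process: on `[K_n, K_{n+1}]` it increases at rate `+1` from
`ℍ(n)` up to `ℍ(n) + V_n` and then decreases at rate `−1` down to `ℍ(n+1)`. -/
def contour (ω : Om) (t : ℝ) : ℝ :=
  let n := sSup {j : ℕ | Kt ω j ≤ t}
  min ((Hchr ω n : ℝ) + (t - Kt ω n)) ((Hchr ω (n + 1) : ℝ) + (Kt ω (n + 1) - t))



lemma mem_of_sInf_eq {S : Set ℕ∞} {t : ℕ} (h : sInf S = (t : ℕ∞)) : (t : ℕ∞) ∈ S := by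
  by_contra hmem
  have h1 : (t : ℕ∞) + 1 ≤ sInf S := by
    refine le_sInf fun x hx => ENat.add_one_le_iff (ENat.coe_ne_top t) |>.2 ?_
    exact lt_of_le_of_ne (h ▸ sInf_le hx) fun e => hmem (e ▸ hx)
  rw [h] at h1
  exact absurd h1 (by exact_mod_cast by omega)

lemma Sw_nat (ω : Om) (j : ℕ) :
    Sw ω (j : ℤ) = ∑ k ∈ Finset.range j, ((Multiset.card (Pc ω (k : ℤ)) : ℤ) - 1) := by
  simp [Sw]

lemma Sw_nat_succ (ω : Om) (j : ℕ) :
    Sw ω ((j + 1 : ℕ) : ℤ) = Sw ω (j : ℤ) + ((Multiset.card (Pc ω (j : ℤ)) : ℤ) - 1) := by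
  rw [Sw_nat, Sw_nat, Finset.sum_range_succ]

lemma Pc_dual (ω : Om) (n : ℤ) (k : ℤ) : Pc (dual n ω) k = Pc ω (n - k - 1) := rfl

lemma Sw_dual (ω : Om) (n : ℕ) : ∀ j : ℕ, j ≤ n →
    Sw (dual (n : ℤ) ω) (j : ℤ) = Sw ω (n : ℤ) - Sw ω ((n - j : ℕ) : ℤ) := by
  intro j
  induction j with
  | zero => intro _; simp [Sw, Sw_nat]
  | succ j ih =>
    intro hj
    have hj' : j ≤ n := Nat.le_of_succ_le hj
    have e1 : ((n : ℤ)) - (j : ℤ) - 1 = ((n - (j+1) : ℕ) : ℤ) := by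
      push_cast [Nat.cast_sub hj]; ring
    have e2 : (n - j : ℕ) = (n - (j+1) : ℕ) + 1 := by omega
    rw [Sw_nat_succ, ih hj', Pc_dual, e1, e2, Sw_nat_succ]
    ring

theorem stmt4 (ω : Om) (n t : ℕ) (ht : tauUp (dual (n : ℤ) ω) 0 = (t : ℕ∞)) (hm : t ≤ n) :
    0 ≤ zetaU (dual (n : ℤ) ω) 0 ∧
    zetaU (dual (n : ℤ) ω) 0 < (Multiset.card (Pc ω ((n - t : ℕ) : ℤ)) : ℤ) ∧
    chiT ω (n - t) (zetaU (dual (n : ℤ) ω) 0).toNat = (n : ℕ∞) := by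
  have hmem := mem_of_sInf_eq (S := {x : ℕ∞ | ∃ k : ℕ, x = (k : ℕ∞) ∧ 0 < k ∧
      (0 : ℤ) ≤ Sw (dual (n : ℤ) ω) (k : ℤ)}) (by exact ht)
  obtain ⟨k, hk, hkpos, hkS⟩ := hmem
  have hkt : k = t := by exact_mod_cast hk.symm
  rw [hkt] at hkpos hkS
  have htpos : 0 < t := hkpos
  have hmin : ∀ k : ℕ, 0 < k → (0 : ℤ) ≤ Sw (dual (n : ℤ) ω) (k : ℤ) → t ≤ k := by
    intro k h1 h2
    have hle : sInf {x : ℕ∞ | ∃ k : ℕ, x = (k : ℕ∞) ∧ 0 < k ∧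
        (0 : ℤ) ≤ Sw (dual (n : ℤ) ω) (k : ℤ)} ≤ (k : ℕ∞) := sInf_le ⟨k, rfl, h1, h2⟩
    rw [show sInf {x : ℕ∞ | ∃ k : ℕ, x = (k : ℕ∞) ∧ 0 < k ∧
        (0 : ℤ) ≤ Sw (dual (n : ℤ) ω) (k : ℤ)} = tauUp (dual (n : ℤ) ω) 0 from rfl,
      ht] at hle
    exact_mod_cast hle
  have hN : tauUpN (dual (n : ℤ) ω) 0 = t := by
    rw [tauUpN, ht]; simp
  have hm1 : n - (t - 1) = (n - t) + 1 := by omega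
  have hz : zetaU (dual (n : ℤ) ω) 0 = Sw ω (((n - t) + 1 : ℕ) : ℤ) - Sw ω (n : ℤ) := by
    rw [zetaU, hN, show ((t : ℤ) - 1) = ((t - 1 : ℕ) : ℤ) by omega,
      Sw_dual ω n (t - 1) (by omega), hm1]
    ring
  have hA : Sw ω ((n - t : ℕ) : ℤ) ≤ Sw ω (n : ℤ) := by
    have h := Sw_dual ω n t hm
    rw [h] at hkS
    omega
  have hz0 : 0 ≤ zetaU (dual (n : ℤ) ω) 0 := by
    by_contra hneg
    have hpos : (0 : ℤ) < Sw (dual (n : ℤ) ω) ((t - 1 : ℕ) : ℤ) := by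
      rw [Sw_dual ω n (t - 1) (by omega), hm1]
      omega
    rcases Nat.eq_or_lt_of_le htpos with h1 | h1
    · rw [← h1] at hpos
      simp [Sw] at hpos
    · have := hmin (t - 1) (by omega) (le_of_lt hpos)
      omega
  refine ⟨hz0, ?_, ?_⟩
  · have hsucc := Sw_nat_succ ω (n - t)
    omega
  · have hcast : (((zetaU (dual (n : ℤ) ω) 0).toNat : ℕ) : ℤ) = zetaU (dual (n : ℤ) ω) 0 :=
      Int.toNat_of_nonneg hz0
    have hSm1 : (((n - t : ℕ) : ℤ) + 1) = (((n - t) + 1 : ℕ) : ℤ) := by push_cast; ring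
    have hSn : Sw ω (n : ℤ) = Sw ω (((n - t : ℕ) : ℤ) + 1)
        - (((zetaU (dual (n : ℤ) ω) 0).toNat : ℕ) : ℤ) := by
      rw [hSm1, hcast]; omega
    refine le_antisymm (sInf_le ⟨n, rfl, by omega, hSn⟩) (le_sInf ?_)
    rintro x ⟨j, rfl, hjm, hjS⟩
    rw [Nat.cast_le]
    by_contra hjn
    push_neg at hjn
    have hk0 : 0 < n - j := by omega
    have hktt : n - j < t := by omega
    have hSj : Sw (dual (n : ℤ) ω) ((n - j : ℕ) : ℤ) = 0 := by
      rw [Sw_dual ω n (n - j) (by omega), show n - (n - j) = j by omega]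
      rw [hSm1] at hjS
      omega
    have := hmin (n - j) hk0 (le_of_eq hSj.symm)
    omega

end
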